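/- For all natural numbers x ≤ y and every real number t, the polynomial family p satisfies the recursion p_{x+1,y+1}(t) = t²·p_{x,y+1}(t) + (1 + (t²−1)·δ_{xy})·p_{x+1,y}(t) + (1−t²)·p_{x,y}(t), where δ_{xy} = 1 if x = y and δ_{xy} = 0 otherwise. -/

import Mathlib

/-- `p_{x,y}(t) = ∑_{l=0}^{min(x,y)} t^{2l} binom(max(x,y), min(x,y)−l) binom(min(x,y), l)`. -/
noncomputable def pPoly (x y : ℕ) (t : ℝ) : ℝ :=
  ∑ l ∈ Finset.range (min x y + 1),
    t ^ (2 * l) * ((max x y).choose (min x y - l) : ℝ) * ((min x y).choose l : ℝ)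

lemma pPoly_eq (x y : ℕ) (h : x ≤ y) (t : ℝ) :
    pPoly x y t = ∑ l ∈ Finset.range (x + 1),
      t ^ (2 * l) * ((y.choose (x - l) : ℝ) * (x.choose l : ℝ)) := by
  simp [pPoly, min_eq_left h, max_eq_right h, mul_assoc]

lemma pPoly_symm (x y : ℕ) (t : ℝ) : pPoly x y t = pPoly y x t := by
  rw [pPoly, pPoly, min_comm, max_comm]

lemma shift_sum (n : ℕ) (t : ℝ) (B : ℕ → ℝ) :
    t ^ 2 * ∑ l ∈ Finset.range n, t ^ (2 * l) * B l
      = ∑ i ∈ Finset.range n, t ^ (2 * (i + 1)) * B i := by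
  rw [Finset.mul_sum]
  refine Finset.sum_congr rfl fun i _ => ?_
  rw [show 2 * (i + 1) = 2 * i + 2 by ring, pow_add]
  ring

lemma extend_sum (x : ℕ) (t : ℝ) (E : ℕ → ℝ) (hE : E (x + 1) = 0) :
    ∑ l ∈ Finset.range (x + 1), t ^ (2 * l) * E l
      = (∑ i ∈ Finset.range (x + 1), t ^ (2 * (i + 1)) * E (i + 1)) + E 0 := by
  rw [Finset.sum_range_succ' (fun l => t ^ (2 * l) * E l) x,
    Finset.sum_range_succ (fun i => t ^ (2 * (i + 1)) * E (i + 1)) x]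
  simp [hE]

lemma helper1 (x : ℕ) (t : ℝ) (A B D E : ℕ → ℝ)
    (hE : E (x + 1) = 0)
    (h0 : A 0 = D 0 + E 0)
    (hm : ∀ m, m ≤ x → A (m + 1) = D (m + 1) + B m + E (m + 1) - E m) :
    ∑ l ∈ Finset.range (x + 2), t ^ (2 * l) * A l
      = t ^ 2 * ∑ l ∈ Finset.range (x + 1), t ^ (2 * l) * B l
        + ∑ l ∈ Finset.range (x + 2), t ^ (2 * l) * D l
        + (1 - t ^ 2) * ∑ l ∈ Finset.range (x + 1), t ^ (2 * l) * E l := by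
  rw [Finset.sum_range_succ' (fun l => t ^ (2 * l) * A l) (x + 1),
    Finset.sum_range_succ' (fun l => t ^ (2 * l) * D l) (x + 1),
    shift_sum, sub_mul, one_mul, shift_sum, extend_sum x t E hE]
  have key : ∀ i ∈ Finset.range (x + 1),
      t ^ (2 * (i + 1)) * A (i + 1)
        = t ^ (2 * (i + 1)) * D (i + 1) + t ^ (2 * (i + 1)) * B i
          + (t ^ (2 * (i + 1)) * E (i + 1) - t ^ (2 * (i + 1)) * E i) := by
    intro i hi
    rw [hm i (by simpa using Nat.lt_succ_iff.mp (Finset.mem_range.mp hi))]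
    ring
  rw [Finset.sum_congr rfl key, Finset.sum_add_distrib, Finset.sum_add_distrib,
    Finset.sum_sub_distrib]
  simp only [h0]
  ring

lemma helper2 (x : ℕ) (t : ℝ) (A B E : ℕ → ℝ)
    (hE : E (x + 1) = 0)
    (h0 : A 0 = E 0)
    (hm : ∀ m, m ≤ x → A (m + 1) = 2 * B m + E (m + 1) - E m) :
    ∑ l ∈ Finset.range (x + 2), t ^ (2 * l) * A l
      = 2 * (t ^ 2 * ∑ l ∈ Finset.range (x + 1), t ^ (2 * l) * B l)
        + (1 - t ^ 2) * ∑ l ∈ Finset.range (x + 1), t ^ (2 * l) * E l := by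
  rw [Finset.sum_range_succ' (fun l => t ^ (2 * l) * A l) (x + 1),
    shift_sum, sub_mul, one_mul, shift_sum, extend_sum x t E hE]
  have key : ∀ i ∈ Finset.range (x + 1),
      t ^ (2 * (i + 1)) * A (i + 1)
        = 2 * (t ^ (2 * (i + 1)) * B i)
          + (t ^ (2 * (i + 1)) * E (i + 1) - t ^ (2 * (i + 1)) * E i) := by
    intro i hi
    rw [hm i (by simpa using Nat.lt_succ_iff.mp (Finset.mem_range.mp hi))]
    ring
  rw [Finset.sum_congr rfl key, Finset.sum_add_distrib, Finset.sum_sub_distrib]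
  simp only [h0]
  rw [Finset.mul_sum]
  ring

/-- The recursion
`p_{x+1,y+1}(t) = t² p_{x,y+1}(t) + (1 + (t²−1) δ_{xy}) p_{x+1,y}(t) + (1−t²) p_{x,y}(t)`
for all `x ≤ y`. -/
theorem stmt_17 (x y : ℕ) (hxy : x ≤ y) (t : ℝ) :
    pPoly (x + 1) (y + 1) t
      = t ^ 2 * pPoly x (y + 1) t
        + (1 + (t ^ 2 - 1) * (if x = y then 1 else 0)) * pPoly (x + 1) y t
        + (1 - t ^ 2) * pPoly x y t := by
  rcases eq_or_lt_of_le hxy with rfl | hlt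
  · -- x = y case
    rw [if_pos rfl, mul_one]
    rw [pPoly_symm (x + 1) x]
    rw [pPoly_eq (x + 1) (x + 1) le_rfl, pPoly_eq x (x + 1) (by omega),
      pPoly_eq x x le_rfl]
    have := helper2 x t
      (fun l => ((x + 1).choose (x + 1 - l) : ℝ) * ((x + 1).choose l : ℝ))
      (fun l => ((x + 1).choose (x - l) : ℝ) * (x.choose l : ℝ))
      (fun l => ((x.choose (x - l) : ℝ)) * (x.choose l : ℝ))
      (by simp [Nat.choose_succ_self])
      (by simp)
      ?_
    · rw [show x + 1 + 1 = x + 2 by ring] at this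
      rw [this]
      ring
    · intro m hmx
      rcases eq_or_lt_of_le hmx with rfl | hmlt
      · simp [Nat.choose_self, Nat.choose_succ_self, Nat.sub_self]
        norm_num
      · obtain ⟨k, hk⟩ : ∃ k, x - m = k + 1 := ⟨x - m - 1, by omega⟩
        have h1 : x + 1 - (m + 1) = k + 1 := by omega
        have h2 : x - (m + 1) = k := by omega
        have s1 : x.choose (k + 1) = x.choose m := by
          rw [← hk, Nat.choose_symm hmx]
        have s2 : x.choose k = x.choose (m + 1) := by
          rw [← h2, Nat.choose_symm (by omega)]
        have s3 : (x + 1).choose (x - m) = (x + 1).choose (m + 1) := by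
          rw [show x - m = x + 1 - (m + 1) by omega, Nat.choose_symm (by omega)]
        have e1 : (x + 1).choose (k + 1) = x.choose (m + 1) + x.choose m := by
          rw [Nat.choose_succ_succ, s1, s2]
        rw [h1, h2, e1, s2, s3, Nat.choose_succ_succ x m, hk, s1]
        push_cast
        ring
  · -- x < y case
    have hx1y : x + 1 ≤ y := hlt
    simp only [if_neg (Nat.ne_of_lt hlt), mul_zero, add_zero, one_mul]
    rw [pPoly_eq (x + 1) (y + 1) (by omega), pPoly_eq x (y + 1) (by omega),
      pPoly_eq (x + 1) y hx1y, pPoly_eq x y (by omega)]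
    have := helper1 x t
      (fun l => (((y + 1).choose (x + 1 - l) : ℝ)) * ((x + 1).choose l : ℝ))
      (fun l => (((y + 1).choose (x - l) : ℝ)) * (x.choose l : ℝ))
      (fun l => ((y.choose (x + 1 - l) : ℝ)) * ((x + 1).choose l : ℝ))
      (fun l => ((y.choose (x - l) : ℝ)) * (x.choose l : ℝ))
      (by simp [Nat.choose_succ_self])
      ?_ ?_
    · rw [show x + 1 + 1 = x + 2 by ring] at this
      rw [this]
    · -- h0 : Pascal for constant term
      simp only [Nat.sub_zero, Nat.choose_zero_right, Nat.cast_one, mul_one]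
      rw [Nat.choose_succ_succ y x]
      push_cast
      ring
    · intro m hmx
      have h1 : x + 1 - (m + 1) = x - m := by omega
      rcases eq_or_lt_of_le hmx with rfl | hmlt
      · simp [Nat.choose_self, Nat.choose_succ_self, Nat.sub_self]
      · obtain ⟨k, hk⟩ : ∃ k, x - m = k + 1 := ⟨x - m - 1, by omega⟩
        have h2 : x - (m + 1) = k := by omega
        rw [h1, h2, hk, Nat.choose_succ_succ y k, Nat.choose_succ_succ x m]
        push_cast
        ring
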